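/- Let α ∈ (0,2) with α ≠ 1 and c > 0, and let x lie in the interior of dom(σ_{α,c}) (i.e., x < −c_α if α < 1, and x > −c_α if α > 1). Then the second derivative of SIGTRON at x equals s_{α,c}''(x) = −α·c·E^{2α−1}/(c + E)² + 2·c·E^{2α}/(c + E)³, where E = exp_{α,c}(−x) = c·(1 + x/c_α)^{1/(1−α)}. -/

import Mathlib

/-- `c_α = c^{1−α}/(α−1)` (real power). -/
noncomputable def cA (α c : ℝ) : ℝ := c ^ (1 - α) / (α - 1)

/-- SIGTRON: extended asymmetric sigmoid with Perceptron. -/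
noncomputable def sigtron (α c : ℝ) (x : ℝ) : ℝ :=
  if α = 1 then 1 / (1 + Real.exp (-x))
  else if α < 1 then
    if x ≤ -(cA α c) then 1 / (1 + (1 + x / cA α c) ^ ((1 : ℝ) / (1 - α))) else 1
  else
    if -(cA α c) < x then 1 / (1 + (1 + x / cA α c) ^ ((1 : ℝ) / (1 - α))) else 0


/-- For `α ∈ (0,2)`, `α ≠ 1`, `c > 0` and `x` in the interior of
`dom(σ_{α,c})` (i.e. `x < −c_α` if `α < 1`, and `x > −c_α` if `α > 1`), the second
derivative of SIGTRON at `x` equals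
`−α·c·E^{2α−1}/(c+E)² + 2·c·E^{2α}/(c+E)³` where `E = c·(1 + x/c_α)^{1/(1−α)}`. -/
theorem sigtron_stmt10 (α c : ℝ) (hα : α ∈ Set.Ioo (0 : ℝ) 2) (hα1 : α ≠ 1)
    (hc : 0 < c) (x : ℝ)
    (hx : (α < 1 → x < -(cA α c)) ∧ (1 < α → -(cA α c) < x))
    (E : ℝ) (hE : E = c * (1 + x / cA α c) ^ ((1 : ℝ) / (1 - α))) :
    iteratedDeriv 2 (sigtron α c) x
      = -α * c * E ^ (2 * α - 1) / (c + E) ^ 2 + 2 * c * E ^ (2 * α) / (c + E) ^ 3 := by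
  have hc' : c ≠ 0 := hc.ne'
  have hcpow : (0:ℝ) < c ^ (1 - α) := Real.rpow_pos_of_pos hc _
  set a := cA α c with ha
  have h1α : (1:ℝ) - α ≠ 0 := sub_ne_zero.mpr (Ne.symm hα1)
  have ha0 : a ≠ 0 := by
    rw [ha, cA]
    exact div_ne_zero hcpow.ne' (sub_ne_zero.mpr hα1)
  set p := (1:ℝ)/(1-α) with hp
  have hp0 : p ≠ 0 := one_div_ne_zero h1α
  set S : ℝ → ℝ := fun y => 1 / (1 + (1 + y / a) ^ p) with hS
  -- eventual description of sigtron near x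
  have key : ∀ᶠ y in nhds x, 0 < 1 + y / a ∧ sigtron α c y = S y := by
    rcases lt_or_gt_of_ne hα1 with h | h
    · have haneg : a < 0 := by
        rw [ha, cA]
        exact div_neg_of_pos_of_neg hcpow (by linarith)
      filter_upwards [Iio_mem_nhds (hx.1 h)] with y hy
      have hy' : y < -a := hy
      refine ⟨?_, ?_⟩
      · have : -1 < y / a := by
          rw [lt_div_iff_of_neg haneg]
          linarith
        linarith
      · simp [sigtron, hα1, h, ← ha, hS, hp, hy'.le]
    · have hapos : 0 < a := by
        rw [ha, cA]
        exact div_pos hcpow (by linarith)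
      filter_upwards [Ioi_mem_nhds (hx.2 h)] with y hy
      have hy' : -a < y := hy
      have hne : ¬ α < 1 := by linarith
      refine ⟨?_, ?_⟩
      · have : -1 < y / a := by
          rw [lt_div_iff₀ hapos]
          linarith
        linarith
      · simp [sigtron, hα1, hne, hy', ← ha, hS, hp]
  -- first derivative formula
  set D : ℝ → ℝ := fun y => c ^ (α - 1) * ((1 + y / a) ^ (p - 1) * ((1 + (1 + y / a) ^ p) ^ 2)⁻¹)
    with hD
  have hpa : 1 / a = -(c ^ (α - 1)) / p := by
    have hca : c ^ (α - 1) = (c ^ ((1:ℝ) - α))⁻¹ := by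
      rw [show α - 1 = -(1 - α) by ring, Real.rpow_neg hc.le]
    rw [hca, ha, cA, hp]
    field_simp
    ring
  have hSderiv : ∀ y : ℝ, 0 < 1 + y / a → HasDerivAt S (D y) y := by
    intro y hg
    have hgy : (1:ℝ) + y / a ≠ 0 := hg.ne'
    have hg1 : HasDerivAt (fun z : ℝ => 1 + z / a) (1 / a) y := by
      simpa using ((hasDerivAt_id y).div_const a).const_add 1
    have hg2 : HasDerivAt (fun z : ℝ => (1 + z / a) ^ p)
        (1 / a * p * (1 + y / a) ^ (p - 1)) y := hg1.rpow_const (Or.inl hgy)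
    have hden : (0:ℝ) < 1 + (1 + y / a) ^ p := by positivity
    have hg3 : HasDerivAt (fun z : ℝ => 1 + (1 + z / a) ^ p)
        (1 / a * p * (1 + y / a) ^ (p - 1)) y := hg2.const_add 1
    have hg4 := hg3.inv hden.ne'
    have : S = fun z : ℝ => (1 + (1 + z / a) ^ p)⁻¹ := by
      funext z; rw [hS]; simp [one_div]
    rw [this]
    refine hg4.congr_deriv ?_
    have hpp : -(c ^ (α - 1)) / p * p = -(c ^ (α - 1)) := div_mul_cancel₀ _ hp0
    rw [hD, hpa, hpp]
    ring
  -- second derivative formula at x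
  have hgx : 0 < 1 + x / a := key.self_of_nhds.1
  have hgx' : (1:ℝ) + x / a ≠ 0 := hgx.ne'
  have hg1 : HasDerivAt (fun z : ℝ => 1 + z / a) (1 / a) x := by
    simpa using ((hasDerivAt_id x).div_const a).const_add 1
  have hA : HasDerivAt (fun z : ℝ => (1 + z / a) ^ (p - 1))
      (1 / a * (p - 1) * (1 + x / a) ^ (p - 1 - 1)) x := hg1.rpow_const (Or.inl hgx')
  have hB : HasDerivAt (fun z : ℝ => 1 + (1 + z / a) ^ p)
      (1 / a * p * (1 + x / a) ^ (p - 1)) x := (hg1.rpow_const (Or.inl hgx')).const_add 1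
  have hden : (0:ℝ) < 1 + (1 + x / a) ^ p := by positivity
  have hBsq : HasDerivAt (fun z : ℝ => (1 + (1 + z / a) ^ p) ^ 2)
      (2 * (1 + (1 + x / a) ^ p) ^ 1 * (1 / a * p * (1 + x / a) ^ (p - 1))) x := by
    exact (hB.pow 2).congr_deriv (by norm_num)
  have hdensq : ((1 + (1 + x / a) ^ p) ^ 2 : ℝ) ≠ 0 := by positivity
  have hBinv := hBsq.inv hdensq
  have hDx := ((hA.mul hBinv).const_mul (c ^ (α - 1)))
  -- iteratedDeriv 2 sigtron x = deriv D x
  have hevS : sigtron α c =ᶠ[nhds x] S := key.mono fun y hy => hy.2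
  have hevD : deriv S =ᶠ[nhds x] D := by
    filter_upwards [key] with y hy
    exact (hSderiv y hy.1).deriv
  have hstep : iteratedDeriv 2 (sigtron α c) x = deriv D x := by
    rw [iteratedDeriv_succ, iteratedDeriv_one]
    have h1 : deriv (sigtron α c) =ᶠ[nhds x] D := hevS.deriv.trans hevD
    exact h1.deriv.self_of_nhds ▸ rfl
  rw [hstep, (show HasDerivAt D _ x from hDx).deriv]
  simp only [Pi.inv_apply]
  -- now pure algebra with rpow
  set G : ℝ := 1 + x / a with hG
  set A : ℝ := G ^ (p - 1) with hAdef
  set B : ℝ := G ^ p with hBdef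
  have hApos : 0 < A := Real.rpow_pos_of_pos hgx _
  have hBpos : 0 < B := Real.rpow_pos_of_pos hgx _
  have hK : (0:ℝ) < 1 + B := by positivity
  have hGp2 : G ^ (p - 1 - 1) = A / G := by
    rw [show p - 1 - 1 = (p - 1) + (-1) by ring, Real.rpow_add hgx, Real.rpow_neg_one,
      hAdef, div_eq_mul_inv]
  have hsq : (c ^ (α - 1)) ^ 2 = c ^ ((α - 1) * 2) := by
    rw [← Real.rpow_natCast (c ^ (α - 1)) 2, ← Real.rpow_mul hc.le]
    norm_num
  have hc2a : c ^ (2 * α) = (c ^ (α - 1)) ^ 2 * c ^ 2 := by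
    rw [hsq, ← Real.rpow_natCast c 2, ← Real.rpow_add hc]
    congr 1
    push_cast
    ring
  have hc2a1 : c ^ (2 * α - 1) = (c ^ (α - 1)) ^ 2 * c := by
    rw [hsq]
    nth_rewrite 3 [← Real.rpow_one c]
    rw [← Real.rpow_add hc]
    congr 1
    ring
  have hE2a : E ^ (2 * α) = c ^ (2 * α) * A ^ 2 := by
    rw [hE, Real.mul_rpow hc.le hBpos.le, hBdef, ← Real.rpow_mul hgx.le, hAdef,
      ← Real.rpow_natCast (G ^ (p - 1)) 2, ← Real.rpow_mul hgx.le]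
    congr 2
    push_cast
    rw [hp]
    field_simp
    ring
  have hE2a1 : E ^ (2 * α - 1) = c ^ (2 * α - 1) * (A / G) := by
    rw [hE, Real.mul_rpow hc.le hBpos.le, hBdef, ← Real.rpow_mul hgx.le, ← hGp2]
    congr 2
    rw [hp]
    field_simp
    ring
  have hp1 : p - 1 = p * α := by
    rw [hp]
    field_simp
    ring
  have hcE : (c + E) ≠ 0 := by
    rw [hE]
    positivity
  have hG0 : G ≠ 0 := hgx.ne'
  have hK0 : (1 + B : ℝ) ≠ 0 := hK.ne'
  rw [hE2a, hE2a1, hc2a, hc2a1, hGp2, hpa, hp1]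
  rw [hE] at hcE ⊢
  clear_value a p G A B
  field_simp
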